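/- Define F : ℝ³ → ℝ by F(x, y, z) = 8(x⁴ + y⁴ + z⁴) − 8(x² + y² + z²) + 3. The set of singular points of the contour surface S(−1) = {p : F(p) = −1}, i.e. points p with F(p) = −1 and ∇F(p) = 0, consists of exactly twelve points: (±1/√2, ±1/√2, 0), (±1/√2, 0, ±1/√2), and (0, ±1/√2, ±1/√2), with all sign choices independent. (These are the twelve nodes of S(−1), corresponding to the edges of a cube.) -/
import Mathlib
set_option maxHeartbeats 1000000


/-- The Chmutov polynomial `F(x, y, z) = 8(x⁴ + y⁴ + z⁴) − 8(x² + y² + z²) + 3`. -/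
def chmutov (p : ℝ × ℝ × ℝ) : ℝ :=
  8 * (p.1 ^ 4 + p.2.1 ^ 4 + p.2.2 ^ 4) - 8 * (p.1 ^ 2 + p.2.1 ^ 2 + p.2.2 ^ 2) + 3

/-- The gradient `∇F(x, y, z) = (32x³ − 16x, 32y³ − 16y, 32z³ − 16z)` of the Chmutov
polynomial. -/
def chmutovGrad (p : ℝ × ℝ × ℝ) : ℝ × ℝ × ℝ :=
  (32 * p.1 ^ 3 - 16 * p.1, 32 * p.2.1 ^ 3 - 16 * p.2.1, 32 * p.2.2 ^ 3 - 16 * p.2.2)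

lemma chmutov_sq : (1 / Real.sqrt 2) ^ 2 = 1 / 2 := by
  rw [div_pow, Real.sq_sqrt] <;> norm_num

lemma chmutov_cubic (t : ℝ) (h : 32 * t ^ 3 - 16 * t = 0) :
    t = 0 ∨ t = 1 / Real.sqrt 2 ∨ t = -(1 / Real.sqrt 2) := by
  have hs := chmutov_sq
  have h32 : (32 : ℝ) * t * (t - 1 / Real.sqrt 2) * (t + 1 / Real.sqrt 2) = 0 := by
    linear_combination h - 32 * t * hs
  rcases mul_eq_zero.1 h32 with h' | h'
  · rcases mul_eq_zero.1 h' with h'' | h''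
    · rcases mul_eq_zero.1 h'' with h3 | h3
      · left; nlinarith
      · left; exact h3
    · right; left; linarith
  · right; right; linarith

/-- The set of singular points of the contour surface `S(−1) = {p : F(p) = −1}` of the Chmutov
polynomial consists of exactly twelve points: `(±1/√2, ±1/√2, 0)`, `(±1/√2, 0, ±1/√2)` and
`(0, ±1/√2, ±1/√2)`, with all sign choices independent — the twelve nodes of `S(−1)`,
corresponding to the edges of a cube. -/
theorem chmutov_nodes_Sneg1 :
    {p : ℝ × ℝ × ℝ | chmutov p = -1 ∧ chmutovGrad p = 0} =
      ({(1 / Real.sqrt 2, 1 / Real.sqrt 2, 0), (1 / Real.sqrt 2, -(1 / Real.sqrt 2), 0),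
        (-(1 / Real.sqrt 2), 1 / Real.sqrt 2, 0), (-(1 / Real.sqrt 2), -(1 / Real.sqrt 2), 0),
        (1 / Real.sqrt 2, 0, 1 / Real.sqrt 2), (1 / Real.sqrt 2, 0, -(1 / Real.sqrt 2)),
        (-(1 / Real.sqrt 2), 0, 1 / Real.sqrt 2), (-(1 / Real.sqrt 2), 0, -(1 / Real.sqrt 2)),
        (0, 1 / Real.sqrt 2, 1 / Real.sqrt 2), (0, 1 / Real.sqrt 2, -(1 / Real.sqrt 2)),
        (0, -(1 / Real.sqrt 2), 1 / Real.sqrt 2), (0, -(1 / Real.sqrt 2), -(1 / Real.sqrt 2))} :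
        Set (ℝ × ℝ × ℝ)) := by
  have hs := chmutov_sq
  ext ⟨x, y, z⟩
  simp only [Set.mem_setOf_eq, Set.mem_insert_iff, Set.mem_singleton_iff, Prod.mk.injEq,
    chmutov, chmutovGrad, Prod.mk_eq_zero]
  have h4 : (1 / Real.sqrt 2) ^ 4 = 1 / 4 := by
    rw [show (4:ℕ) = 2 * 2 from rfl, pow_mul, hs]; norm_num
  have h24 : Real.sqrt 2 ^ 4 = 4 := by
    rw [show (4:ℕ) = 2 * 2 from rfl, pow_mul, Real.sq_sqrt] <;> norm_num
  have hA2 : (-(Real.sqrt 2)⁻¹) ^ 4 = 1 / 4 := by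
    rw [Even.neg_pow ⟨2, rfl⟩, inv_pow, h24]; norm_num
  constructor
  · rintro ⟨hF, hx, hy, hz⟩
    rcases chmutov_cubic x hx with rfl | rfl | rfl <;>
    rcases chmutov_cubic y hy with rfl | rfl | rfl <;>
    rcases chmutov_cubic z hz with rfl | rfl | rfl <;>
      first
        | (exfalso; norm_num [hA2, h24] at hF; done)
        | simp
  · have hz : 32 * (0:ℝ) ^ 3 - 16 * 0 = 0 := by norm_num
    have hp : 32 * (1 / Real.sqrt 2) ^ 3 - 16 * (1 / Real.sqrt 2) = 0 := by
      linear_combination 32 * (1 / Real.sqrt 2) * hs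
    have hn : 32 * (-(1 / Real.sqrt 2)) ^ 3 - 16 * (-(1 / Real.sqrt 2)) = 0 := by
      linear_combination (-32) * (1 / Real.sqrt 2) * hs
    rintro (⟨rfl, rfl, rfl⟩ | ⟨rfl, rfl, rfl⟩ | ⟨rfl, rfl, rfl⟩ | ⟨rfl, rfl, rfl⟩ |
      ⟨rfl, rfl, rfl⟩ | ⟨rfl, rfl, rfl⟩ | ⟨rfl, rfl, rfl⟩ | ⟨rfl, rfl, rfl⟩ |
      ⟨rfl, rfl, rfl⟩ | ⟨rfl, rfl, rfl⟩ | ⟨rfl, rfl, rfl⟩ | ⟨rfl, rfl, rfl⟩) <;>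
      exact ⟨by linear_combination (16 * (1 / Real.sqrt 2) ^ 2 - 8) * hs, by assumption, by assumption, by assumption⟩
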